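/- Minimax lower bound via Fano: with V a 2ε-packing of A of size M ≥ 2, V uniform on {1,…,M}, and observations B generated from p(·|α_v), for any nondecreasing ℓ : ℝ≥0 → ℝ≥0, min over estimators α̂ : B → A of max_{α∈A} E_{B∼p(·|α)}[ℓ(d(α̂(B), α))] ≥ ℓ(ε)·(H(V|B) − 1)/log₂ M. -/

import Mathlib

/-- minimax lower bound via Fano: for any estimator, the worst-case
expected loss is at least `ℓ(ε) · (H(V|B) − 1) / log₂ M`, where `V` is uniform on a
`2ε`-packing of size `M ≥ 2` and `H(V|B)` is the conditional Shannon entropy (bits)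
of the joint distribution `p(v,b) = (1/M) p(b|α_v)`. -/
theorem minimax_lower_bound_via_fano
    {X B : Type*} [MetricSpace X] [Fintype B]
    (A : Set X) (hA : Bornology.IsBounded A) (ε : ℝ) (hε : 0 < ε)
    (M : ℕ) (hM : 2 ≤ M) (αv : Fin M → X) (hmem : ∀ v, αv v ∈ A)
    (hpack : ∀ v v' : Fin M, v ≠ v' → 2 * ε ≤ dist (αv v) (αv v'))
    (q : X → B → ℝ) (hq : ∀ α ∈ A, (∀ b, 0 ≤ q α b) ∧ ∑ b, q α b = 1)
    (pB : B → ℝ) (hpB : ∀ b, pB b = ∑ v, (1 / (M : ℝ)) * q (αv v) b)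
    (HVB : ℝ)
    (hHVB : HVB = - ∑ v : Fin M, ∑ b,
        ((1 / (M : ℝ)) * q (αv v) b) *
          Real.logb 2 (((1 / (M : ℝ)) * q (αv v) b) / pB b))
    (ℓ : ℝ → ℝ) (hℓmono : ∀ x y, 0 ≤ x → x ≤ y → ℓ x ≤ ℓ y)
    (hℓpos : ∀ x, 0 ≤ x → 0 ≤ ℓ x)
    (αhat : B → X) :
    ∃ α ∈ A,
      (∑ b, q α b * ℓ (dist (αhat b) α))
        ≥ ℓ ε * ((HVB - 1) / Real.logb 2 (M : ℝ)) := by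
  classical
  have hMpos : (0:ℝ) < M := by exact_mod_cast (by omega : 0 < M)
  have hM1 : (2:ℝ) ≤ M := by exact_mod_cast hM
  have hq0 : ∀ v b, 0 ≤ q (αv v) b := fun v b => ((hq _ (hmem v)).1 b)
  have hq1 : ∀ v, ∑ b, q (αv v) b = 1 := fun v => (hq _ (hmem v)).2
  have hlog2 : (0:ℝ) < Real.log 2 := Real.log_pos (by norm_num)
  set L := Real.logb 2 (M:ℝ) with hLdef
  have hL1 : 1 ≤ L := by
    rw [hLdef]
    calc (1:ℝ) = Real.logb 2 2 := (Real.logb_self_eq_one (by norm_num)).symm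
    _ ≤ Real.logb 2 (M:ℝ) :=
        Real.logb_le_logb_of_le (by norm_num) (by norm_num) hM1
  have hLpos : 0 < L := lt_of_lt_of_le one_pos hL1
  -- the joint pmf
  set p : Fin M → B → ℝ := fun v b => (1 / (M : ℝ)) * q (αv v) b with hpdef
  have hp0 : ∀ v b, 0 ≤ p v b := fun v b => by
    have := hq0 v b; positivity
  have hpB0 : ∀ b, 0 ≤ pB b := by
    intro b; rw [hpB]
    exact Finset.sum_nonneg fun v _ => hp0 v b
  have hple : ∀ v b, p v b ≤ pB b := by
    intro v b; rw [hpB]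
    exact Finset.single_le_sum (fun v _ => hp0 v b) (Finset.mem_univ v)
  have hpsum : ∑ v, ∑ b, p v b = 1 := by
    simp only [hpdef]
    rw [Finset.sum_congr rfl fun v _ => by
      rw [← Finset.mul_sum, hq1 v, mul_one]]
    simp only [Finset.sum_const, Finset.card_univ, Fintype.card_fin, nsmul_eq_mul]
    field_simp
  have hpBsum : ∑ b, pB b = 1 := by
    rw [Finset.sum_congr rfl fun b _ => hpB b, Finset.sum_comm]
    exact hpsum
  -- the decoder
  set ψ : B → Fin M := fun b =>
    if h : ∃ v, dist (αhat b) (αv v) < ε then h.choose else ⟨0, by omega⟩ with hψdef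
  have hψ : ∀ b v, ψ b ≠ v → ε ≤ dist (αhat b) (αv v) := by
    intro b v hne
    by_contra hcon
    push_neg at hcon
    have hex : ∃ v, dist (αhat b) (αv v) < ε := ⟨v, hcon⟩
    have hch : dist (αhat b) (αv hex.choose) < ε := hex.choose_spec
    have hψb : ψ b = hex.choose := by simp [hψdef, dif_pos hex]
    by_cases hvv : hex.choose = v
    · exact hne (hψb.trans hvv)
    · have h2 : 2 * ε ≤ dist (αv hex.choose) (αv v) := hpack _ _ hvv
      have htri : dist (αv hex.choose) (αv v)
          ≤ dist (αhat b) (αv hex.choose) + dist (αhat b) (αv v) := by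
        rw [dist_comm (αhat b) (αv hex.choose)]
        exact dist_triangle _ _ _
      linarith
  -- probability of error
  set Pe : ℝ := ∑ v, ∑ b, (if ψ b = v then 0 else p v b) with hPedef
  -- the Gibbs comparison measure
  set s : Fin M → B → ℝ := fun v b =>
    (if ψ b = v then (1/2 : ℝ) else 1 / (2 * (M:ℝ))) * pB b with hsdef
  -- pointwise key inequality
  have key : ∀ v b, p v b * Real.logb 2 (pB b / p v b)
      ≤ (p v b + (if ψ b = v then 0 else p v b) * L) + (s v b - p v b) / Real.log 2 := by
    intro v b
    rcases eq_or_lt_of_le (hp0 v b) with h0 | hpos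
    · have hs0 : 0 ≤ s v b := by
        have := hpB0 b
        simp only [hsdef]
        split_ifs <;> positivity
      rw [← h0]
      have hh : 0 ≤ s v b / Real.log 2 := div_nonneg hs0 hlog2.le
      simp only [zero_mul, ite_self, zero_add, sub_zero]
      linarith
    · have hpBpos : 0 < pB b := lt_of_lt_of_le hpos (hple v b)
      set t : ℝ := if ψ b = v then (1/2 : ℝ) else 1 / (2 * (M:ℝ)) with htdef
      have htpos : 0 < t := by
        rw [htdef]; split_ifs <;> positivity
      have hseq : s v b = t * pB b := rfl
      have hspos : 0 < s v b := by rw [hseq]; exact mul_pos htpos hpBpos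
      have hsplit : pB b / p v b = (1/t) * (s v b / p v b) := by
        rw [hseq]
        field_simp
      have hlogb : Real.logb 2 (pB b / p v b)
          = Real.logb 2 (1/t) + Real.logb 2 (s v b / p v b) := by
        rw [hsplit, Real.logb_mul (by positivity) (by positivity)]
      have hinvt : Real.logb 2 (1/t) = 1 + (if ψ b = v then 0 else L) := by
        rw [htdef]
        split_ifs with h
        · norm_num
        · have h1 : (1:ℝ)/(1/(2*(M:ℝ))) = 2 * (M:ℝ) := by field_simp
          rw [h1, Real.logb_mul (by norm_num) (by positivity),
            Real.logb_self_eq_one (by norm_num)]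
      have hgibbs : p v b * Real.logb 2 (s v b / p v b) ≤ (s v b - p v b) / Real.log 2 := by
        have hlog : Real.log (s v b / p v b) ≤ s v b / p v b - 1 :=
          Real.log_le_sub_one_of_pos (by positivity)
        have hmul : p v b * Real.log (s v b / p v b) ≤ s v b - p v b := by
          have h2 := mul_le_mul_of_nonneg_left hlog (le_of_lt hpos)
          calc p v b * Real.log (s v b / p v b)
              ≤ p v b * (s v b / p v b - 1) := h2
          _ = s v b - p v b := by field_simp
        rw [Real.logb, ← mul_div_assoc]
        exact div_le_div_of_nonneg_right hmul hlog2.le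
      calc p v b * Real.logb 2 (pB b / p v b)
          = p v b * (1 + (if ψ b = v then 0 else L))
            + p v b * Real.logb 2 (s v b / p v b) := by
            rw [hlogb, hinvt]; ring
      _ ≤ (p v b + (if ψ b = v then 0 else p v b) * L) + (s v b - p v b) / Real.log 2 := by
            have heq : p v b * (1 + (if ψ b = v then 0 else L))
                = p v b + (if ψ b = v then 0 else p v b) * L := by
              split_ifs <;> ring
            rw [heq]
            exact add_le_add_right hgibbs _
  -- rewrite HVB with flipped logs
  have hHVB' : HVB = ∑ v, ∑ b, p v b * Real.logb 2 (pB b / p v b) := by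
    rw [hHVB, neg_eq_iff_eq_neg, ← Finset.sum_neg_distrib]
    apply Finset.sum_congr rfl
    intro v _
    rw [← Finset.sum_neg_distrib]
    apply Finset.sum_congr rfl
    intro b _
    have : pB b / p v b = (p v b / pB b)⁻¹ := by rw [inv_div]
    rw [this, Real.logb_inv]
    ring
  -- total mass of the comparison measure
  have hS : ∑ v, ∑ b, s v b ≤ 1 := by
    rw [Finset.sum_comm]
    have hb : ∀ b, ∑ v, s v b ≤ pB b := by
      intro b
      have hcoef : ∑ v, (if ψ b = v then (1/2:ℝ) else 1 / (2 * (M:ℝ))) ≤ 1 := by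
        have hrw : ∀ v : Fin M, (if ψ b = v then (1/2:ℝ) else 1 / (2 * (M:ℝ)))
            = 1 / (2 * (M:ℝ)) + (if ψ b = v then (1/2:ℝ) - 1 / (2 * (M:ℝ)) else 0) := by
          intro v; split_ifs <;> ring
        rw [Finset.sum_congr rfl fun v _ => hrw v, Finset.sum_add_distrib,
          Finset.sum_const, Finset.sum_ite_eq, Finset.card_univ]
        simp only [Fintype.card_fin, nsmul_eq_mul, Finset.mem_univ, if_true]
        have h2M : (M:ℝ) * (1 / (2 * (M:ℝ))) = 1/2 := by field_simp
        rw [h2M]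
        have : 0 < 1 / (2 * (M:ℝ)) := by positivity
        linarith
      have : ∑ v, s v b = (∑ v, (if ψ b = v then (1/2:ℝ) else 1 / (2 * (M:ℝ)))) * pB b := by
        rw [Finset.sum_mul]
      rw [this]
      calc (∑ v, (if ψ b = v then (1/2:ℝ) else 1 / (2 * (M:ℝ)))) * pB b
          ≤ 1 * pB b := mul_le_mul_of_nonneg_right hcoef (hpB0 b)
      _ = pB b := one_mul _
    calc ∑ b, ∑ v, s v b ≤ ∑ b, pB b := Finset.sum_le_sum fun b _ => hb b
    _ = 1 := hpBsum
  -- Fano inequality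
  have hfano : HVB ≤ 1 + Pe * L := by
    rw [hHVB']
    have h1 : ∑ v, ∑ b, p v b * Real.logb 2 (pB b / p v b)
        ≤ ∑ v, ∑ b, ((p v b + (if ψ b = v then 0 else p v b) * L)
            + (s v b - p v b) / Real.log 2) :=
      Finset.sum_le_sum fun v _ => Finset.sum_le_sum fun b _ => key v b
    have hexp : ∑ v, ∑ b, ((p v b + (if ψ b = v then 0 else p v b) * L)
            + (s v b - p v b) / Real.log 2)
        = ((∑ v, ∑ b, p v b) + Pe * L)
            + ((∑ v, ∑ b, s v b) - (∑ v, ∑ b, p v b)) / Real.log 2 := by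
      rw [hPedef]
      simp only [Finset.sum_add_distrib, Finset.sum_sub_distrib, ← Finset.sum_div,
        ← Finset.sum_mul]
    rw [hexp, hpsum] at h1
    have hneg : ((∑ v, ∑ b, s v b) - 1) / Real.log 2 ≤ 0 :=
      div_nonpos_of_nonpos_of_nonneg (by linarith) hlog2.le
    linarith
  -- the estimator's expected loss under each v
  have hℓε : 0 ≤ ℓ ε := hℓpos ε hε.le
  have hEv : ∀ v, ℓ ε * (∑ b, (if ψ b = v then 0 else q (αv v) b))
      ≤ ∑ b, q (αv v) b * ℓ (dist (αhat b) (αv v)) := by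
    intro v
    rw [Finset.mul_sum]
    apply Finset.sum_le_sum
    intro b _
    split_ifs with h
    · rw [mul_zero]
      exact mul_nonneg (hq0 v b) (hℓpos _ dist_nonneg)
    · have hd := hψ b v h
      have hm := hℓmono ε _ hε.le hd
      calc ℓ ε * q (αv v) b = q (αv v) b * ℓ ε := mul_comm _ _
      _ ≤ q (αv v) b * ℓ (dist (αhat b) (αv v)) :=
          mul_le_mul_of_nonneg_left hm (hq0 v b)
  -- pick the worst v
  have : Nonempty (Fin M) := ⟨⟨0, by omega⟩⟩
  obtain ⟨v₀, -, hmax⟩ := Finset.exists_max_image Finset.univ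
    (fun v => ∑ b, q (αv v) b * ℓ (dist (αhat b) (αv v))) Finset.univ_nonempty
  refine ⟨αv v₀, hmem v₀, ?_⟩
  have hsum_le : (M:ℝ) * (ℓ ε * Pe)
      ≤ (M:ℝ) * (∑ b, q (αv v₀) b * ℓ (dist (αhat b) (αv v₀))) := by
    have hqp : ∀ v, (∑ b, (if ψ b = v then 0 else q (αv v) b))
        = (M:ℝ) * ∑ b, (if ψ b = v then 0 else p v b) := by
      intro v
      rw [Finset.mul_sum]
      apply Finset.sum_congr rfl
      intro b _
      split_ifs
      · rw [mul_zero]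
      · simp only [hpdef]
        field_simp
    calc (M:ℝ) * (ℓ ε * Pe) = ∑ v : Fin M, ℓ ε * ((M:ℝ) * ∑ b, (if ψ b = v then 0 else p v b)) := by
          rw [hPedef, Finset.mul_sum, Finset.mul_sum]
          exact Finset.sum_congr rfl fun v _ => by ring
    _ = ∑ v : Fin M, ℓ ε * (∑ b, (if ψ b = v then 0 else q (αv v) b)) := by
          exact Finset.sum_congr rfl fun v _ => by rw [hqp v]
    _ ≤ ∑ v : Fin M, ∑ b, q (αv v) b * ℓ (dist (αhat b) (αv v)) :=
          Finset.sum_le_sum fun v _ => hEv v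
    _ ≤ ∑ v : Fin M, (∑ b, q (αv v₀) b * ℓ (dist (αhat b) (αv v₀))) :=
          Finset.sum_le_sum fun v _ => hmax v (Finset.mem_univ v)
    _ = (M:ℝ) * (∑ b, q (αv v₀) b * ℓ (dist (αhat b) (αv v₀))) := by
          rw [Finset.sum_const, Finset.card_univ, Fintype.card_fin, nsmul_eq_mul]
  have hPe_ge : (HVB - 1) / L ≤ Pe := by
    rw [div_le_iff₀ hLpos]
    linarith
  have hfinal : ℓ ε * ((HVB - 1) / L) ≤ ℓ ε * Pe :=
    mul_le_mul_of_nonneg_left hPe_ge hℓε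
  have hEb : ℓ ε * Pe ≤ ∑ b, q (αv v₀) b * ℓ (dist (αhat b) (αv v₀)) :=
    le_of_mul_le_mul_left hsum_le hMpos
  exact le_trans hfinal hEb
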